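/- Let a, b, c, E, I, S, C be real numbers and φ(v) = (a·f(v) + b·g(v) + c)². Then E·∫_B φ(v) e(v) dv + I·∫_B φ(v) i(v) dv + S·∫_B φ(v) s(v) dv = C holds if and only if 10(3E + S)·a² + 10(3S + E)·b² + 20·I·a·b + 63(E + S)·c² = (945/(4π))·C. -/

import Mathlib

open MeasureTheory Real Set

noncomputable section

theorem inner_eq (G : ℝ → ℝ → ℝ → ℝ)
    (hG : Continuous fun p : ℝ × ℝ × ℝ => G p.1 p.2.1 p.2.2) (x : ℝ) :
    ∫ q : ℝ × ℝ, Set.indicator {q : ℝ × ℝ | q.1^2 + q.2^2 < 1 - x^2}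
        (fun q => G x q.1 q.2) q
    = ∫ r in Set.Ioo (0:ℝ) (Real.sqrt (1 - x^2)), ∫ θ in Set.Ioo (-π) π,
        r * G x (r * Real.cos θ) (r * Real.sin θ) := by
  rw [← integral_comp_polarCoord_symm]
  have hpt : ∀ p : ℝ × ℝ,
      p.1 • Set.indicator {q : ℝ × ℝ | q.1^2 + q.2^2 < 1 - x^2} (fun q => G x q.1 q.2)
        (polarCoord.symm p)
      = Set.indicator {p : ℝ × ℝ | p.1^2 < 1 - x^2}
          (fun p => p.1 * G x (p.1 * Real.cos p.2) (p.1 * Real.sin p.2)) p := by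
    intro p
    have hmem : polarCoord.symm p ∈ {q : ℝ × ℝ | q.1^2 + q.2^2 < 1 - x^2} ↔
        p.1 ^ 2 < 1 - x^2 := by
      have h1 : (p.1 * Real.cos p.2)^2 + (p.1 * Real.sin p.2)^2 = p.1^2 := by
        have := Real.sin_sq_add_cos_sq p.2
        linear_combination p.1^2 * this
      simp only [polarCoord_symm_apply, Set.mem_setOf_eq, h1]
    have h1 : (p.1 * Real.cos p.2)^2 + (p.1 * Real.sin p.2)^2 = p.1^2 := by
      have := Real.sin_sq_add_cos_sq p.2
      linear_combination p.1^2 * this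
    simp only [Set.indicator_apply, Set.mem_setOf_eq, polarCoord_symm_apply, h1]
    split_ifs with h
    · exact smul_eq_mul _ _
    · exact smul_zero _
  simp_rw [hpt]
  rw [polarCoord_target, setIntegral_indicator (by
    apply measurableSet_lt _ measurable_const; fun_prop)]
  have hset : (Set.Ioi (0:ℝ) ×ˢ Set.Ioo (-π) π) ∩ {p : ℝ × ℝ | p.1^2 < 1 - x^2}
      = Set.Ioo (0:ℝ) (Real.sqrt (1 - x^2)) ×ˢ Set.Ioo (-π) π := by
    ext ⟨r, θ⟩
    simp only [Set.mem_inter_iff, Set.mem_prod, Set.mem_Ioi, Set.mem_Ioo, Set.mem_setOf_eq]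
    constructor
    · rintro ⟨⟨hr, hθ⟩, hT⟩
      exact ⟨⟨hr, (Real.lt_sqrt hr.le).2 hT⟩, hθ⟩
    · rintro ⟨⟨hr0, hrs⟩, hθ⟩
      exact ⟨⟨hr0, hθ⟩, (Real.lt_sqrt hr0.le).1 hrs⟩
  rw [hset]
  have hcont2 : Continuous (fun p : ℝ × ℝ => p.1 * G x (p.1 * Real.cos p.2)
      (p.1 * Real.sin p.2)) := by
    apply continuous_fst.mul
    have : Continuous fun p : ℝ × ℝ => ((x, p.1 * Real.cos p.2, p.1 * Real.sin p.2) : ℝ × ℝ × ℝ) := by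
      fun_prop
    exact hG.comp this
  rw [Measure.volume_eq_prod]
  rw [setIntegral_prod]
  exact ((hcont2.continuousOn.integrableOn_compact (isCompact_Icc.prod isCompact_Icc)).mono_set
    (Set.prod_mono Set.Ioo_subset_Icc_self Set.Ioo_subset_Icc_self))

theorem key_reduction (G : ℝ → ℝ → ℝ → ℝ)
    (hG : Continuous fun p : ℝ × ℝ × ℝ => G p.1 p.2.1 p.2.2) :
    ∫ v in Metric.ball (0 : EuclideanSpace ℝ (Fin 3)) 1, G (v 0) (v 1) (v 2)
    = ∫ x in (-1:ℝ)..1, ∫ r in (0:ℝ)..Real.sqrt (1 - x^2), ∫ θ in (-π)..π,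
        r * G x (r * Real.cos θ) (r * Real.sin θ) := by
  have hball : ∀ v : EuclideanSpace ℝ (Fin 3), v ∈ Metric.ball (0 : EuclideanSpace ℝ (Fin 3)) 1 ↔
      (v 0)^2 + (v 1)^2 + (v 2)^2 < 1 := by
    intro v
    rw [Metric.mem_ball, dist_zero_right, EuclideanSpace.norm_eq]
    rw [show (1:ℝ) = Real.sqrt 1 by simp]
    rw [Real.sqrt_lt_sqrt_iff (by positivity)]
    simp [Fin.sum_univ_three, sq_abs]
  set S3 : Set (Fin 3 → ℝ) := {y | y 0 ^ 2 + y 1 ^ 2 + y 2 ^ 2 < 1} with hS3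
  have hS3m : MeasurableSet S3 := by
    apply measurableSet_lt _ measurable_const
    fun_prop
  set g : (Fin 3 → ℝ) → ℝ := S3.indicator (fun y => G (y 0) (y 1) (y 2)) with hg
  have hGpi : Continuous fun y : Fin 3 → ℝ => G (y 0) (y 1) (y 2) := by
    have : Continuous fun y : Fin 3 → ℝ => ((y 0, y 1, y 2) : ℝ × ℝ × ℝ) := by fun_prop
    exact hG.comp this
  -- Step A : to pi space
  have stepA : ∫ v in Metric.ball (0 : EuclideanSpace ℝ (Fin 3)) 1, G (v 0) (v 1) (v 2)
      = ∫ y : Fin 3 → ℝ, g y := by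
    rw [← integral_indicator measurableSet_ball]
    rw [← ((EuclideanSpace.volume_preserving_symm_measurableEquiv_toLp (Fin 3)).integral_comp
      (MeasurableEquiv.measurableEmbedding _) g)]
    congr 1
    funext v
    by_cases hv : v ∈ Metric.ball (0 : EuclideanSpace ℝ (Fin 3)) 1
    · rw [Set.indicator_of_mem hv, hg, Set.indicator_of_mem]
      · rfl
      · exact (hball v).1 hv
    · rw [Set.indicator_of_notMem hv, hg, Set.indicator_of_notMem]
      intro h
      exact hv ((hball v).2 h)
  -- integrability of g
  have hgInt : Integrable g := by
    rw [hg, integrable_indicator_iff hS3m]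
    have hsub : S3 ⊆ Icc (fun _ => (-1:ℝ)) (fun _ => (1:ℝ)) := by
      intro y hy
      rw [hS3, Set.mem_setOf_eq] at hy
      constructor <;> intro i <;> fin_cases i <;> simp <;> nlinarith [sq_nonneg (y 0), sq_nonneg (y 1), sq_nonneg (y 2)]
    exact ((hGpi.continuousOn).integrableOn_compact isCompact_Icc).mono_set hsub
  -- Step B : split off first coordinate
  have e2 := MeasurableEquiv.piFinSuccAbove (fun _ : Fin 3 => ℝ) 0
  have stepB : ∫ y : Fin 3 → ℝ, g y
      = ∫ z : ℝ × (Fin 2 → ℝ), g ((MeasurableEquiv.piFinSuccAbove (fun _ : Fin 3 => ℝ) 0).symm z) := by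
    rw [((MeasurePreserving.symm _ (volume_preserving_piFinSuccAbove (fun _ : Fin 3 => ℝ) 0)).integral_comp
      (MeasurableEquiv.measurableEmbedding _) g)]
  have hgInt2 : Integrable (fun z : ℝ × (Fin 2 → ℝ) =>
      g ((MeasurableEquiv.piFinSuccAbove (fun _ : Fin 3 => ℝ) 0).symm z)) := by
    exact ((MeasurePreserving.symm _ (volume_preserving_piFinSuccAbove (fun _ : Fin 3 => ℝ) 0)).integrable_comp_emb
      (MeasurableEquiv.measurableEmbedding _)).2 hgInt
  -- Step D : Fubini
  have stepD : ∫ z : ℝ × (Fin 2 → ℝ), g ((MeasurableEquiv.piFinSuccAbove (fun _ : Fin 3 => ℝ) 0).symm z)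
      = ∫ x : ℝ, ∫ w : Fin 2 → ℝ, g ((MeasurableEquiv.piFinSuccAbove (fun _ : Fin 3 => ℝ) 0).symm (x, w)) := by
    rw [Measure.volume_eq_prod] at hgInt2 ⊢
    exact integral_prod _ hgInt2
  rw [stepA, stepB, stepD]
  -- Step E : inner integral to ℝ × ℝ and then polar coordinates
  have stepE : ∀ x : ℝ, (∫ w : Fin 2 → ℝ,
        g ((MeasurableEquiv.piFinSuccAbove (fun _ : Fin 3 => ℝ) 0).symm (x, w)))
      = ∫ r in Set.Ioo (0:ℝ) (Real.sqrt (1 - x^2)), ∫ θ in Set.Ioo (-π) π,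
          r * G x (r * Real.cos θ) (r * Real.sin θ) := by
    intro x
    rw [← ((MeasurePreserving.symm _ (volume_preserving_finTwoArrow ℝ)).integral_comp
      (MeasurableEquiv.measurableEmbedding _)
      (fun w => g ((MeasurableEquiv.piFinSuccAbove (fun _ : Fin 3 => ℝ) 0).symm (x, w))))]
    rw [← inner_eq G hG x]
    congr 1
    funext q
    have h0 : (MeasurableEquiv.piFinSuccAbove (fun _ : Fin 3 => ℝ) 0).symm
        (x, MeasurableEquiv.finTwoArrow.symm q) 0 = x := by
      simp [MeasurableEquiv.piFinSuccAbove_symm_apply]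
    have h1 : (MeasurableEquiv.piFinSuccAbove (fun _ : Fin 3 => ℝ) 0).symm
        (x, MeasurableEquiv.finTwoArrow.symm q) 1 = q.1 := by
      simp [MeasurableEquiv.piFinSuccAbove_symm_apply]
      try rfl
    have h2 : (MeasurableEquiv.piFinSuccAbove (fun _ : Fin 3 => ℝ) 0).symm
        (x, MeasurableEquiv.finTwoArrow.symm q) 2 = q.2 := by
      simp [MeasurableEquiv.piFinSuccAbove_symm_apply]
      try rfl
    rw [hg]
    simp only [Set.indicator_apply, hS3, Set.mem_setOf_eq, h0, h1, h2]
    have : x ^ 2 + q.1 ^ 2 + q.2 ^ 2 < 1 ↔ q.1 ^ 2 + q.2 ^ 2 < 1 - x ^ 2 := by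
      constructor <;> intro <;> linarith
    simp only [this]
  have stepF : (fun x : ℝ => ∫ w : Fin 2 → ℝ,
        g ((MeasurableEquiv.piFinSuccAbove (fun _ : Fin 3 => ℝ) 0).symm (x, w)))
      = fun x : ℝ => ∫ r in Set.Ioo (0:ℝ) (Real.sqrt (1 - x^2)), ∫ θ in Set.Ioo (-π) π,
          r * G x (r * Real.cos θ) (r * Real.sin θ) := funext stepE
  rw [stepF]
  -- convert RHS interval integrals to Ioo integrals
  have hRHS : ∀ x : ℝ, (∫ r in (0:ℝ)..Real.sqrt (1 - x^2), ∫ θ in (-π)..π,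
        r * G x (r * Real.cos θ) (r * Real.sin θ))
      = ∫ r in Set.Ioo (0:ℝ) (Real.sqrt (1 - x^2)), ∫ θ in Set.Ioo (-π) π,
          r * G x (r * Real.cos θ) (r * Real.sin θ) := by
    intro x
    rw [intervalIntegral.integral_of_le (Real.sqrt_nonneg _),
      MeasureTheory.integral_Ioc_eq_integral_Ioo]
    apply setIntegral_congr_fun measurableSet_Ioo
    intro r _
    dsimp only
    rw [intervalIntegral.integral_of_le (by linarith [Real.pi_pos] : -π ≤ π),
      MeasureTheory.integral_Ioc_eq_integral_Ioo]
  simp_rw [hRHS]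
  -- restrict the outer integral to (-1, 1)
  rw [intervalIntegral.integral_of_le (by norm_num : (-1:ℝ) ≤ 1),
    MeasureTheory.integral_Ioc_eq_integral_Ioo]
  symm
  apply setIntegral_eq_integral_of_forall_compl_eq_zero
  intro x hx
  have : Real.sqrt (1 - x^2) = 0 := by
    rw [Real.sqrt_eq_zero']
    simp only [Set.mem_Ioo, not_and_or, not_lt] at hx
    rcases hx with h | h <;> nlinarith
  rw [this]
  simp

lemma trig_int (k1 k2 k3 k4 k5 k6 k7 k8 k9 k10 k11 : ℝ) :
    ∫ θ in (-π)..π, (k1 + k2*(Real.cos θ^2 - Real.sin θ^2)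
      + k3*(Real.cos θ^4 - 3*Real.sin θ^2*Real.cos θ^2)
      + k4*(3*Real.sin θ^2*Real.cos θ^2 - Real.sin θ^4)
      + k5*(-4*Real.cos θ^3*Real.sin θ) + k6*(4*Real.sin θ^3*Real.cos θ)
      + k7*Real.cos θ + k8*(3*Real.sin θ^2*Real.cos θ) + k9*(-Real.sin θ)
      + k10*(-3*Real.cos θ^2*Real.sin θ) + k11*(2*Real.sin θ*Real.cos θ))
    = 2*π*k1 := by
  have hder : ∀ θ ∈ Set.uIcc (-π) π, HasDerivAt (fun t : ℝ =>
      k1*t + k2*(Real.sin t*Real.cos t) + k3*(Real.sin t*Real.cos t^3)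
      + k4*(Real.sin t^3*Real.cos t) + k5*(Real.cos t^4) + k6*(Real.sin t^4)
      + k7*Real.sin t + k8*(Real.sin t^3) + k9*Real.cos t + k10*(Real.cos t^3)
      + k11*(Real.sin t^2))
      (k1 + k2*(Real.cos θ^2 - Real.sin θ^2)
      + k3*(Real.cos θ^4 - 3*Real.sin θ^2*Real.cos θ^2)
      + k4*(3*Real.sin θ^2*Real.cos θ^2 - Real.sin θ^4)
      + k5*(-4*Real.cos θ^3*Real.sin θ) + k6*(4*Real.sin θ^3*Real.cos θ)
      + k7*Real.cos θ + k8*(3*Real.sin θ^2*Real.cos θ) + k9*(-Real.sin θ)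
      + k10*(-3*Real.cos θ^2*Real.sin θ) + k11*(2*Real.sin θ*Real.cos θ)) θ := by
    intro θ _
    have hs := Real.hasDerivAt_sin θ
    have hc := Real.hasDerivAt_cos θ
    have H := (((((((((((hasDerivAt_id θ).const_mul k1).add
      ((hs.mul hc).const_mul k2)).add
      ((hs.mul (hc.pow 3)).const_mul k3)).add
      (((hs.pow 3).mul hc).const_mul k4)).add
      ((hc.pow 4).const_mul k5)).add
      ((hs.pow 4).const_mul k6)).add
      (hs.const_mul k7)).add
      ((hs.pow 3).const_mul k8)).add
      (hc.const_mul k9)).add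
      ((hc.pow 3).const_mul k10)).add
      ((hs.pow 2).const_mul k11)
    refine H.congr_deriv ?_
    simp only [Pi.pow_apply]
    push_cast
    ring
  rw [intervalIntegral.integral_eq_sub_of_hasDerivAt hder
    (Continuous.intervalIntegrable (by fun_prop) _ _)]
  simp only [Real.sin_pi, Real.cos_pi, Real.sin_neg, Real.cos_neg, neg_neg]
  ring

lemma theta_cc (u w d : ℝ) :
    ∫ θ in (-π)..π, (u*Real.cos θ + w*Real.sin θ + d)^2 * Real.cos θ^2
    = π*(3/4*u^2 + 1/4*w^2 + d^2) := by
  have : (fun θ : ℝ => (u*Real.cos θ + w*Real.sin θ + d)^2 * Real.cos θ^2)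
      = fun θ : ℝ => ((3/8*u^2 + 1/8*w^2 + 1/2*d^2) + (3/8*u^2 + 1/8*w^2 + 1/2*d^2)*(Real.cos θ^2 - Real.sin θ^2)
      + (1/4*u^2 - 1/4*w^2)*(Real.cos θ^4 - 3*Real.sin θ^2*Real.cos θ^2)
      + (0:ℝ)*(3*Real.sin θ^2*Real.cos θ^2 - Real.sin θ^4)
      + (-(u*w)/2)*(-4*Real.cos θ^3*Real.sin θ) + (0:ℝ)*(4*Real.sin θ^3*Real.cos θ)
      + (2*u*d)*Real.cos θ + (-(2*u*d)/3)*(3*Real.sin θ^2*Real.cos θ) + (0:ℝ)*(-Real.sin θ)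
      + (-(2*w*d)/3)*(-3*Real.cos θ^2*Real.sin θ) + (0:ℝ)*(2*Real.sin θ*Real.cos θ)) := by
    funext θ
    linear_combination ((1/2)*d^2 + (1/8)*w^2 + (3/8)*u^2 + 2*Real.cos θ*u*d
      + (1/4)*Real.cos θ^2*w^2 + (3/4)*Real.cos θ^2*u^2) * Real.sin_sq_add_cos_sq θ
  rw [this, trig_int]
  ring

lemma theta_ss (u w d : ℝ) :
    ∫ θ in (-π)..π, (u*Real.cos θ + w*Real.sin θ + d)^2 * Real.sin θ^2
    = π*(1/4*u^2 + 3/4*w^2 + d^2) := by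
  have : (fun θ : ℝ => (u*Real.cos θ + w*Real.sin θ + d)^2 * Real.sin θ^2)
      = fun θ : ℝ => ((1/8*u^2 + 3/8*w^2 + 1/2*d^2) + (1/8*u^2 - 3/8*w^2 - 1/2*d^2)*(Real.cos θ^2 - Real.sin θ^2)
      + (-1/4*u^2)*(Real.cos θ^4 - 3*Real.sin θ^2*Real.cos θ^2)
      + (-1/4*w^2)*(3*Real.sin θ^2*Real.cos θ^2 - Real.sin θ^4)
      + (0:ℝ)*(-4*Real.cos θ^3*Real.sin θ) + (u*w/2)*(4*Real.sin θ^3*Real.cos θ)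
      + (0:ℝ)*Real.cos θ + (2*u*d/3)*(3*Real.sin θ^2*Real.cos θ) + (-2*w*d)*(-Real.sin θ)
      + (2*w*d/3)*(-3*Real.cos θ^2*Real.sin θ) + (0:ℝ)*(2*Real.sin θ*Real.cos θ)) := by
    funext θ
    linear_combination ((1/2)*d^2 + (3/8)*w^2 + (1/8)*u^2 + (1/4)*Real.cos θ^2*u^2
      + 2*Real.sin θ*w*d + (3/4)*Real.sin θ^2*w^2) * Real.sin_sq_add_cos_sq θ
  rw [this, trig_int]
  ring

lemma theta_cs (u w d : ℝ) :
    ∫ θ in (-π)..π, (u*Real.cos θ + w*Real.sin θ + d)^2 * (Real.cos θ * Real.sin θ)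
    = π*(u*w/2) := by
  have : (fun θ : ℝ => (u*Real.cos θ + w*Real.sin θ + d)^2 * (Real.cos θ * Real.sin θ))
      = fun θ : ℝ => ((u*w/4) + (u*w/4)*(Real.cos θ^2 - Real.sin θ^2)
      + (-(u*w)/2)*(Real.cos θ^4 - 3*Real.sin θ^2*Real.cos θ^2)
      + (0:ℝ)*(3*Real.sin θ^2*Real.cos θ^2 - Real.sin θ^4)
      + (-1/4*u^2)*(-4*Real.cos θ^3*Real.sin θ) + (1/4*w^2)*(4*Real.sin θ^3*Real.cos θ)
      + (0:ℝ)*Real.cos θ + (2*w*d/3)*(3*Real.sin θ^2*Real.cos θ) + (0:ℝ)*(-Real.sin θ)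
      + (-(2*u*d)/3)*(-3*Real.cos θ^2*Real.sin θ) + (1/2*d^2)*(2*Real.sin θ*Real.cos θ)) := by
    funext θ
    linear_combination ((1/4)*u*w + (1/2)*Real.cos θ^2*u*w) * Real.sin_sq_add_cos_sq θ
  rw [this, trig_int]
  ring

lemma r_int (A B R : ℝ) : ∫ r in (0:ℝ)..R, (A*r^5 + B*r^3) = A*R^6/6 + B*R^4/4 := by
  rw [intervalIntegral.integral_add (f := fun r => A*r^5) (g := fun r => B*r^3)
      ((continuous_const.mul (continuous_pow 5)).intervalIntegrable _ _)
      ((continuous_const.mul (continuous_pow 3)).intervalIntegrable _ _),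
    intervalIntegral.integral_const_mul, intervalIntegral.integral_const_mul,
    integral_pow, integral_pow]
  norm_num
  ring

lemma poly_int (c0 c1 c2 c3 c4 c5 c6 c7 c8 : ℝ) :
    ∫ x in (-1:ℝ)..1, (c0 + c1*x + c2*x^2 + c3*x^3 + c4*x^4 + c5*x^5 + c6*x^6 + c7*x^7 + c8*x^8)
    = 2*c0 + 2/3*c2 + 2/5*c4 + 2/7*c6 + 2/9*c8 := by
  have hder : ∀ x ∈ Set.uIcc (-1:ℝ) 1, HasDerivAt (fun t : ℝ =>
      c0*t + c1/2*t^2 + c2/3*t^3 + c3/4*t^4 + c4/5*t^5 + c5/6*t^6 + c6/7*t^7 + c7/8*t^8 + c8/9*t^9)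
      (c0 + c1*x + c2*x^2 + c3*x^3 + c4*x^4 + c5*x^5 + c6*x^6 + c7*x^7 + c8*x^8) x := by
    intro x _
    have H := ((((((((hasDerivAt_id x).const_mul c0).add
      (((hasDerivAt_pow 2 x)).const_mul (c1/2))).add
      (((hasDerivAt_pow 3 x)).const_mul (c2/3))).add
      (((hasDerivAt_pow 4 x)).const_mul (c3/4))).add
      (((hasDerivAt_pow 5 x)).const_mul (c4/5))).add
      (((hasDerivAt_pow 6 x)).const_mul (c5/6))).add
      (((hasDerivAt_pow 7 x)).const_mul (c6/7))).add
      (((hasDerivAt_pow 8 x)).const_mul (c7/8))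
    have H2 := H.add (((hasDerivAt_pow 9 x)).const_mul (c8/9))
    refine H2.congr_deriv ?_
    push_cast
    ring
  rw [intervalIntegral.integral_eq_sub_of_hasDerivAt hder
    (Continuous.intervalIntegrable (by fun_prop) _ _)]
  norm_num
  ring

lemma xint1 : ∫ x in (-1:ℝ)..1, ((1+x)^2*(1-x^2)^3) = 64/63 := by
  rw [show (fun x : ℝ => (1+x)^2*(1-x^2)^3)
      = fun x : ℝ => ((1:ℝ) + 2*x + (-2)*x^2 + (-6)*x^3 + (0:ℝ)*x^4 + 6*x^5 + 2*x^6 + (-2)*x^7 + (-1)*x^8)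
    from funext fun x => by ring, poly_int]
  norm_num

lemma xint2 : ∫ x in (-1:ℝ)..1, ((1-x^2)^2) = 16/15 := by
  rw [show (fun x : ℝ => (1-x^2)^2)
      = fun x : ℝ => ((1:ℝ) + (0:ℝ)*x + (-2)*x^2 + (0:ℝ)*x^3 + (1:ℝ)*x^4 + (0:ℝ)*x^5 + (0:ℝ)*x^6 + (0:ℝ)*x^7 + (0:ℝ)*x^8)
    from funext fun x => by ring, poly_int]
  norm_num

lemma int_e (a b c : ℝ) :
    (∫ v in Metric.ball (0 : EuclideanSpace ℝ (Fin 3)) 1,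
        (a * ((1 + v 0) * v 1) + b * ((1 + v 0) * v 2) + c) ^ 2 * (v 1) ^ 2)
    = π*(3*a^2+b^2)*(8/189) + π*c^2*(4/15) := by
  have h1 : (∫ v in Metric.ball (0 : EuclideanSpace ℝ (Fin 3)) 1,
        (a * ((1 + v 0) * v 1) + b * ((1 + v 0) * v 2) + c) ^ 2 * (v 1) ^ 2)
      = ∫ x in (-1:ℝ)..1, ∫ r in (0:ℝ)..Real.sqrt (1-x^2), ∫ θ in (-π)..π,
          r * ((a * ((1 + x) * (r * Real.cos θ)) + b * ((1 + x) * (r * Real.sin θ)) + c) ^ 2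
            * (r * Real.cos θ) ^ 2) :=
    key_reduction (fun x y z => (a * ((1 + x) * y) + b * ((1 + x) * z) + c) ^ 2 * y ^ 2)
      (by fun_prop)
  rw [h1]
  have hθ : ∀ x r : ℝ, (∫ θ in (-π)..π,
      r * ((a * ((1 + x) * (r * Real.cos θ)) + b * ((1 + x) * (r * Real.sin θ)) + c) ^ 2
        * (r * Real.cos θ) ^ 2))
      = (π*(3/4*a^2 + 1/4*b^2)*(1+x)^2)*r^5 + (π*c^2)*r^3 := by
    intro x r
    rw [show (fun θ : ℝ => r * ((a * ((1 + x) * (r * Real.cos θ)) + b * ((1 + x) * (r * Real.sin θ)) + c) ^ 2 * (r * Real.cos θ) ^ 2))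
        = fun θ : ℝ => r^3 * ((a*(1+x)*r * Real.cos θ + b*(1+x)*r * Real.sin θ + c)^2 * Real.cos θ^2)
      from funext fun θ => by ring,
      intervalIntegral.integral_const_mul, theta_cc]
    ring
  simp_rw [hθ, r_int]
  rw [intervalIntegral.integral_congr (g := fun x : ℝ =>
      (π*(3/4*a^2+1/4*b^2)/6) * ((1+x)^2*(1-x^2)^3) + (π*c^2/4) * ((1-x^2)^2)) ?_]
  · rw [intervalIntegral.integral_add
        ((Continuous.intervalIntegrable (by fun_prop) _ _))
        ((Continuous.intervalIntegrable (by fun_prop) _ _)),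
      intervalIntegral.integral_const_mul, intervalIntegral.integral_const_mul, xint1, xint2]
    ring
  · intro x hx
    rw [Set.uIcc_of_le (by norm_num : (-1:ℝ) ≤ 1)] at hx
    have h0 : (0:ℝ) ≤ 1 - x^2 := by nlinarith [hx.1, hx.2]
    have h2 : Real.sqrt (1-x^2)^2 = 1 - x^2 := Real.sq_sqrt h0
    dsimp only
    rw [show Real.sqrt (1-x^2)^6 = ((Real.sqrt (1-x^2))^2)^3 by ring,
      show Real.sqrt (1-x^2)^4 = ((Real.sqrt (1-x^2))^2)^2 by ring, h2]
    ring

lemma int_i (a b c : ℝ) :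
    (∫ v in Metric.ball (0 : EuclideanSpace ℝ (Fin 3)) 1,
        (a * ((1 + v 0) * v 1) + b * ((1 + v 0) * v 2) + c) ^ 2 * (v 1 * v 2))
    = π*a*b*(16/189) := by
  have h1 : (∫ v in Metric.ball (0 : EuclideanSpace ℝ (Fin 3)) 1,
        (a * ((1 + v 0) * v 1) + b * ((1 + v 0) * v 2) + c) ^ 2 * (v 1 * v 2))
      = ∫ x in (-1:ℝ)..1, ∫ r in (0:ℝ)..Real.sqrt (1-x^2), ∫ θ in (-π)..π,
          r * ((a * ((1 + x) * (r * Real.cos θ)) + b * ((1 + x) * (r * Real.sin θ)) + c) ^ 2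
            * ((r * Real.cos θ) * (r * Real.sin θ))) :=
    key_reduction (fun x y z => (a * ((1 + x) * y) + b * ((1 + x) * z) + c) ^ 2 * (y * z))
      (by fun_prop)
  rw [h1]
  have hθ : ∀ x r : ℝ, (∫ θ in (-π)..π,
      r * ((a * ((1 + x) * (r * Real.cos θ)) + b * ((1 + x) * (r * Real.sin θ)) + c) ^ 2
        * ((r * Real.cos θ) * (r * Real.sin θ))))
      = (π*((a*(1+x))*(b*(1+x))/2))*r^5 + (0:ℝ)*r^3 := by
    intro x r
    rw [show (fun θ : ℝ => r * ((a * ((1 + x) * (r * Real.cos θ)) + b * ((1 + x) * (r * Real.sin θ)) + c) ^ 2 * ((r * Real.cos θ) * (r * Real.sin θ))))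
        = fun θ : ℝ => r^3 * ((a*(1+x)*r * Real.cos θ + b*(1+x)*r * Real.sin θ + c)^2 * (Real.cos θ * Real.sin θ))
      from funext fun θ => by ring,
      intervalIntegral.integral_const_mul, theta_cs]
    ring
  simp_rw [hθ, r_int]
  rw [intervalIntegral.integral_congr (g := fun x : ℝ =>
      (π*a*b/12) * ((1+x)^2*(1-x^2)^3) + (0:ℝ) * ((1-x^2)^2)) ?_]
  · rw [intervalIntegral.integral_add
        ((Continuous.intervalIntegrable (by fun_prop) _ _))
        ((Continuous.intervalIntegrable (by fun_prop) _ _)),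
      intervalIntegral.integral_const_mul, intervalIntegral.integral_const_mul, xint1, xint2]
    ring
  · intro x hx
    rw [Set.uIcc_of_le (by norm_num : (-1:ℝ) ≤ 1)] at hx
    have h0 : (0:ℝ) ≤ 1 - x^2 := by nlinarith [hx.1, hx.2]
    have h2 : Real.sqrt (1-x^2)^2 = 1 - x^2 := Real.sq_sqrt h0
    dsimp only
    rw [show Real.sqrt (1-x^2)^6 = ((Real.sqrt (1-x^2))^2)^3 by ring,
      show Real.sqrt (1-x^2)^4 = ((Real.sqrt (1-x^2))^2)^2 by ring, h2]
    ring

lemma int_s (a b c : ℝ) :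
    (∫ v in Metric.ball (0 : EuclideanSpace ℝ (Fin 3)) 1,
        (a * ((1 + v 0) * v 1) + b * ((1 + v 0) * v 2) + c) ^ 2 * (v 2) ^ 2)
    = π*(a^2+3*b^2)*(8/189) + π*c^2*(4/15) := by
  have h1 : (∫ v in Metric.ball (0 : EuclideanSpace ℝ (Fin 3)) 1,
        (a * ((1 + v 0) * v 1) + b * ((1 + v 0) * v 2) + c) ^ 2 * (v 2) ^ 2)
      = ∫ x in (-1:ℝ)..1, ∫ r in (0:ℝ)..Real.sqrt (1-x^2), ∫ θ in (-π)..π,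
          r * ((a * ((1 + x) * (r * Real.cos θ)) + b * ((1 + x) * (r * Real.sin θ)) + c) ^ 2
            * (r * Real.sin θ) ^ 2) :=
    key_reduction (fun x y z => (a * ((1 + x) * y) + b * ((1 + x) * z) + c) ^ 2 * z ^ 2)
      (by fun_prop)
  rw [h1]
  have hθ : ∀ x r : ℝ, (∫ θ in (-π)..π,
      r * ((a * ((1 + x) * (r * Real.cos θ)) + b * ((1 + x) * (r * Real.sin θ)) + c) ^ 2
        * (r * Real.sin θ) ^ 2))
      = (π*(1/4*a^2 + 3/4*b^2)*(1+x)^2)*r^5 + (π*c^2)*r^3 := by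
    intro x r
    rw [show (fun θ : ℝ => r * ((a * ((1 + x) * (r * Real.cos θ)) + b * ((1 + x) * (r * Real.sin θ)) + c) ^ 2 * (r * Real.sin θ) ^ 2))
        = fun θ : ℝ => r^3 * ((a*(1+x)*r * Real.cos θ + b*(1+x)*r * Real.sin θ + c)^2 * Real.sin θ^2)
      from funext fun θ => by ring,
      intervalIntegral.integral_const_mul, theta_ss]
    ring
  simp_rw [hθ, r_int]
  rw [intervalIntegral.integral_congr (g := fun x : ℝ =>
      (π*(1/4*a^2+3/4*b^2)/6) * ((1+x)^2*(1-x^2)^3) + (π*c^2/4) * ((1-x^2)^2)) ?_]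
  · rw [intervalIntegral.integral_add
        ((Continuous.intervalIntegrable (by fun_prop) _ _))
        ((Continuous.intervalIntegrable (by fun_prop) _ _)),
      intervalIntegral.integral_const_mul, intervalIntegral.integral_const_mul, xint1, xint2]
    ring
  · intro x hx
    rw [Set.uIcc_of_le (by norm_num : (-1:ℝ) ≤ 1)] at hx
    have h0 : (0:ℝ) ≤ 1 - x^2 := by nlinarith [hx.1, hx.2]
    have h2 : Real.sqrt (1-x^2)^2 = 1 - x^2 := Real.sq_sqrt h0
    dsimp only
    rw [show Real.sqrt (1-x^2)^6 = ((Real.sqrt (1-x^2))^2)^3 by ring,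
      show Real.sqrt (1-x^2)^4 = ((Real.sqrt (1-x^2))^2)^2 by ring, h2]
    ring

/-- (D.27): with `φ(v) = (a f(v) + b g(v) + c)²`, `f(v) = (1+v₂)v₃`,
`g(v) = (1+v₂)v₄`, `e(v) = (v₃)²`, `i(v) = v₃v₄`, `s(v) = (v₄)²` on the open
unit ball `B ⊂ ℝ³`, the integral equation `E⟨φ,e⟩ + I⟨φ,i⟩ + S⟨φ,s⟩ = C` holds
iff `10(3E+S)a² + 10(3S+E)b² + 20Iab + 63(E+S)c² = (945/(4π))C`;
coordinates `v 0, v 1, v 2` are `v₂, v₃, v₄`. -/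
theorem integral_equation_reduction (a b c E I S C : ℝ) :
    (E * (∫ v in Metric.ball (0 : EuclideanSpace ℝ (Fin 3)) 1,
        (a * ((1 + v 0) * v 1) + b * ((1 + v 0) * v 2) + c) ^ 2 * (v 1) ^ 2) +
     I * (∫ v in Metric.ball (0 : EuclideanSpace ℝ (Fin 3)) 1,
        (a * ((1 + v 0) * v 1) + b * ((1 + v 0) * v 2) + c) ^ 2 * (v 1 * v 2)) +
     S * (∫ v in Metric.ball (0 : EuclideanSpace ℝ (Fin 3)) 1,
        (a * ((1 + v 0) * v 1) + b * ((1 + v 0) * v 2) + c) ^ 2 * (v 2) ^ 2) = C) ↔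
    (10 * (3 * E + S) * a ^ 2 + 10 * (3 * S + E) * b ^ 2 + 20 * I * a * b
      + 63 * (E + S) * c ^ 2 = (945 / (4 * π)) * C) := by
  rw [int_e a b c, int_i a b c, int_s a b c]
  rw [show E * (π*(3*a^2+b^2)*(8/189) + π*c^2*(4/15)) + I * (π*a*b*(16/189))
      + S * (π*(a^2+3*b^2)*(8/189) + π*c^2*(4/15))
      = (4*π/945) * (10 * (3 * E + S) * a ^ 2 + 10 * (3 * S + E) * b ^ 2 + 20 * I * a * b
        + 63 * (E + S) * c ^ 2) from by ring]
  have hπ : (4*π/945) ≠ 0 := by positivity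
  constructor
  · intro h
    rw [← h]
    field_simp
  · intro h
    rw [h]
    field_simp
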